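/- With s = (Δ/ε)·ln(m(e^ε − 1)/δ + 1) and η ∈ ℝ^m having i.i.d. coordinates from the truncated Laplace distribution with support [−s,s] and scale Δ/ε, the probability that b(D) − s + η lies outside the box [b(D')−2s, b(D')] is at most δ, for any neighboring databases D, D' with ||b(D) − b(D')||_∞ ≤ Δ. -/

import Mathlib

open MeasureTheory

lemma exp_integral_pos_aux (a p q : ℝ) (ha : a ≠ 0) :
    ∫ x in p..q, Real.exp (a * x) = (Real.exp (a * q) - Real.exp (a * p)) / a := by
  rw [intervalIntegral.integral_comp_mul_left (fun x => Real.exp x) ha, integral_exp,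
    smul_eq_mul]
  field_simp

lemma exp_integral_neg_aux (a p q : ℝ) (ha : a ≠ 0) :
    ∫ x in p..q, Real.exp (-(a * x)) = (Real.exp (-(a * p)) - Real.exp (-(a * q))) / a := by
  have h := exp_integral_pos_aux (-a) p q (neg_ne_zero.2 ha)
  simp only [neg_mul] at h
  rw [h, div_neg]; ring


set_option maxHeartbeats 1000000 in
/-- Claim 2: With `s = (Δ/ε)·ln(m(e^ε − 1)/δ + 1)` and `η` having i.i.d.
coordinates from the truncated Laplace distribution on `[−s,s]` with scale `Δ/ε`, the
probability that `b(D) − s + η` lies outside the box `[b(D')−2s, b(D')]` is at most `δ`,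
for neighboring databases with `‖b(D) − b(D')‖_∞ ≤ Δ`. -/
theorem prob_outside_box_le_delta
    (Δ ε δ : ℝ) (m : ℕ) (hΔ : 0 < Δ) (hε : 0 < ε) (hδ0 : 0 < δ) (hδ1 : δ < 1)
    (hm : 1 ≤ m)
    (s : ℝ) (hs : s = Δ / ε * Real.log ((m : ℝ) * (Real.exp ε - 1) / δ + 1))
    (hΔs : Δ ≤ s)
    (Z : ℝ) (hZ : Z = 2 * Δ * (1 - Real.exp (-ε * s / Δ)) / ε)
    (ν : Measure ℝ)
    (hν : ν = volume.withDensity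
      (fun η => ENNReal.ofReal (if |η| ≤ s then (1 / Z) * Real.exp (-|η| * ε / Δ) else 0)))
    (bD bD' : Fin m → ℝ) (hsens : ∀ i, |bD i - bD' i| ≤ Δ) :
    Measure.pi (fun _ : Fin m => ν)
      {η : Fin m → ℝ | ¬ ∀ i, bD' i - 2 * s ≤ bD i - s + η i ∧ bD i - s + η i ≤ bD' i}
      ≤ ENNReal.ofReal δ := by
  classical
  have hΔ0 : Δ ≠ 0 := ne_of_gt hΔ
  have hε0 : ε ≠ 0 := ne_of_gt hε
  have hs0 : 0 < s := lt_of_lt_of_le hΔ hΔs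
  set a : ℝ := ε / Δ with ha_def
  have ha : 0 < a := div_pos hε hΔ
  have ha0 : a ≠ 0 := ne_of_gt ha
  set K : ℝ := Real.exp ε with hK
  have hK1 : 1 < K := by
    rw [hK, show (1:ℝ) = Real.exp 0 by simp]
    exact Real.exp_lt_exp.mpr hε
  set M : ℝ := (m : ℝ) * (K - 1) / δ + 1 with hM
  have hm1 : (1 : ℝ) ≤ (m : ℝ) := by exact_mod_cast hm
  have hm0 : (0 : ℝ) < (m : ℝ) := by linarith
  have hKm1 : 0 < K - 1 := by linarith
  have hM1 : 1 < M := by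
    have : 0 < (m : ℝ) * (K - 1) / δ := by positivity
    simp only [hM]; linarith
  have hM0 : 0 < M := by linarith
  have has : a * s = Real.log M := by
    rw [hs, ha_def]; field_simp
  have hEs : Real.exp (-(a * s)) = 1 / M := by
    rw [Real.exp_neg, has, Real.exp_log hM0, one_div]
  have hexparg : -ε * s / Δ = -(a * s) := by rw [ha_def]; ring
  have hZ' : Z = 2 / a * (1 - 1 / M) := by
    rw [hZ, hexparg, hEs, ha_def]; field_simp
  have hZpos : 0 < Z := by
    have h1 : 0 < 1 - 1 / M := by
      have : 1 / M < 1 := by rw [div_lt_one hM0]; exact hM1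
      linarith
    rw [hZ']; positivity
  have hZ0 : Z ≠ 0 := ne_of_gt hZpos
  clear_value a K M
  -- the density as a real function
  set f : ℝ → ℝ := fun x => if |x| ≤ s then (1 / Z) * Real.exp (-|x| * ε / Δ) else 0 with hf
  have hν2 : ν = volume.withDensity (fun x => ENNReal.ofReal (f x)) := hν
  clear_value f
  have hfnn : ∀ x, 0 ≤ f x := by
    intro x; simp only [hf]; split
    · positivity
    · exact le_refl 0
  have hfindicator : f = Set.indicator (Set.Icc (-s) s)
      (fun x => (1 / Z) * Real.exp (-|x| * ε / Δ)) := by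
    funext x
    simp only [hf, Set.indicator, Set.mem_Icc, ← abs_le]
  have hcont : Continuous (fun x : ℝ => (1 / Z) * Real.exp (-|x| * ε / Δ)) := by fun_prop
  have hfi : Integrable f := by
    rw [hfindicator]
    exact (hcont.integrableOn_Icc).integrable_indicator measurableSet_Icc
  have hνA : ∀ A : Set ℝ, MeasurableSet A → ν A = ENNReal.ofReal (∫ x in A, f x) := by
    intro A hA
    rw [hν2, withDensity_apply _ hA,
      ← ofReal_integral_eq_lintegral_ofReal hfi.integrableOn (ae_of_all _ hfnn)]
  -- integral of f on Icc p q for 0 ≤ p ≤ q ≤ s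
  have hIccPos : ∀ p q : ℝ, 0 ≤ p → p ≤ q → q ≤ s →
      ∫ x in Set.Icc p q, f x
        = (1 / Z) * ((Real.exp (-(a * p)) - Real.exp (-(a * q))) / a) := by
    intro p q hp hpq hqs
    rw [integral_Icc_eq_integral_Ioc, ← intervalIntegral.integral_of_le hpq]
    have heq : ∀ x ∈ Set.uIcc p q, f x = (1 / Z) * Real.exp (-(a * x)) := by
      intro x hx
      rw [Set.uIcc_of_le hpq, Set.mem_Icc] at hx
      have h1 : |x| ≤ s := by rw [abs_le]; constructor <;> linarith
      have h2 : |x| = x := abs_of_nonneg (by linarith)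
      simp only [hf, if_pos h1, h2]
      congr 1
      rw [ha_def]; ring
    rw [intervalIntegral.integral_congr heq, intervalIntegral.integral_const_mul,
      exp_integral_neg_aux a p q ha0]
  -- integral of f on Icc p q for -s ≤ p ≤ q ≤ 0
  have hIccNeg : ∀ p q : ℝ, -s ≤ p → p ≤ q → q ≤ 0 →
      ∫ x in Set.Icc p q, f x
        = (1 / Z) * ((Real.exp (a * q) - Real.exp (a * p)) / a) := by
    intro p q hp hpq hq0
    rw [integral_Icc_eq_integral_Ioc, ← intervalIntegral.integral_of_le hpq]
    have heq : ∀ x ∈ Set.uIcc p q, f x = (1 / Z) * Real.exp (a * x) := by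
      intro x hx
      rw [Set.uIcc_of_le hpq, Set.mem_Icc] at hx
      have h1 : |x| ≤ s := by rw [abs_le]; constructor <;> linarith
      have h2 : |x| = -x := abs_of_nonpos (by linarith)
      simp only [hf, if_pos h1, h2]
      congr 1
      rw [ha_def]; ring
    rw [intervalIntegral.integral_congr heq, intervalIntegral.integral_const_mul,
      exp_integral_pos_aux a p q ha0]
  -- total mass one
  have hind_self : Set.indicator (Set.Icc (-s) s) f = f := by
    funext x
    apply Set.indicator_apply_eq_self.mpr
    intro hx
    simp only [hf]
    rw [if_neg]
    intro h
    exact hx (Set.mem_Icc.mpr (abs_le.mp h))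
  have h_univ_eq : ∫ x, f x = ∫ x in Set.Icc (-s) s, f x := by
    conv_lhs => rw [← hind_self]
    rw [integral_indicator measurableSet_Icc]
  have hsplit : ∫ x in Set.Icc (-s) s, f x
      = (∫ x in Set.Icc (-s) 0, f x) + ∫ x in Set.Icc 0 s, f x := by
    rw [integral_Icc_eq_integral_Ioc, integral_Icc_eq_integral_Ioc,
      integral_Icc_eq_integral_Ioc,
      ← intervalIntegral.integral_of_le (by linarith : -s ≤ s),
      ← intervalIntegral.integral_of_le (by linarith : -s ≤ (0:ℝ)),
      ← intervalIntegral.integral_of_le hs0.le,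
      intervalIntegral.integral_add_adjacent_intervals
        (hfi.intervalIntegrable) (hfi.intervalIntegrable)]
  have hInt_univ : ∫ x, f x = 1 := by
    rw [h_univ_eq, hsplit, hIccNeg (-s) 0 (le_refl _) (by linarith) (le_refl _),
      hIccPos 0 s (le_refl _) hs0.le (le_refl _)]
    rw [show a * (-s) = -(a * s) by ring, hEs, hZ']
    have hM10 : 1 - 1 / M ≠ 0 := by
      have : 1 / M < 1 := by rw [div_lt_one hM0]; exact hM1
      intro h; linarith [this]
    simp only [mul_zero, Real.exp_zero, mul_neg, neg_zero]
    obtain ⟨u, hu⟩ : ∃ u : ℝ, u = 1 - 1 / M := ⟨_, rfl⟩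
    have hu0 : u ≠ 0 := by rw [hu]; exact hM10
    rw [← hu]
    field_simp
    ring
  have hν_univ : ν Set.univ = 1 := by
    rw [hνA _ MeasurableSet.univ, Measure.restrict_univ, hInt_univ, ENNReal.ofReal_one]
  haveI : IsFiniteMeasure ν := ⟨by rw [hν_univ]; exact ENNReal.one_lt_top⟩
  -- complement of the support has measure zero
  have hν_compl : ν (Set.Icc (-s) s)ᶜ = 0 := by
    rw [hνA _ measurableSet_Icc.compl]
    rw [setIntegral_eq_zero_of_forall_eq_zero]
    · simp
    · intro x hx
      simp only [hf]
      rw [if_neg]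
      intro h
      exact hx (Set.mem_Icc.mpr (abs_le.mp h))
  -- tail masses
  set t : ℝ := (1 / Z) * ((Real.exp (-(a * (s - Δ))) - Real.exp (-(a * s))) / a) with ht
  clear_value t
  have htail1 : ν (Set.Icc (s - Δ) s) = ENNReal.ofReal t := by
    rw [ht,hνA _ measurableSet_Icc, hIccPos (s - Δ) s (by linarith) (by linarith) (le_refl _)]
  have htail2 : ν (Set.Icc (-s) (Δ - s)) = ENNReal.ofReal t := by
    rw [ht,hνA _ measurableSet_Icc, hIccNeg (-s) (Δ - s) (le_refl _) (by linarith) (by linarith)]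
    congr 2
    rw [show a * (Δ - s) = -(a * (s - Δ)) by ring, show a * (-s) = -(a * s) by ring]
  have ht_nonneg : 0 ≤ t := by
    have hle : Real.exp (-(a * s)) ≤ Real.exp (-(a * (s - Δ))) := by
      apply Real.exp_le_exp.mpr; nlinarith
    rw [ht]
    exact mul_nonneg (by positivity) (div_nonneg (by linarith) ha.le)
  -- the key arithmetic: t + t = δ / m
  have h2t : t + t = δ / m := by
    have hexpK : Real.exp (-(a * (s - Δ))) = K * (1 / M) := by
      rw [show -(a * (s - Δ)) = ε + -(a * s) by rw [ha_def]; field_simp; ring,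
        Real.exp_add, hEs, hK]
    have hMm1 : M - 1 = (m : ℝ) * (K - 1) / δ := by rw [hM]; ring
    have hkey : t + t = (K - 1) / (M - 1) := by
      rw [ht, hexpK, hEs, hZ']
      have hM1' : M - 1 ≠ 0 := by intro h; linarith
      field_simp
      ring
    rw [hkey, hMm1, div_div_eq_mul_div, mul_comm ((m : ℝ)) (K - 1),
      mul_div_mul_left _ _ hKm1.ne']
  -- per-coordinate bad sets
  set T : Fin m → Set ℝ :=
    fun i => {x | x < (bD' i - bD i) - s ∨ (bD' i - bD i) + s < x} with hT
  clear_value T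
  have hTsub : ∀ i, T i ⊆ (Set.Icc (-s) (Δ - s) ∪ Set.Icc (s - Δ) s) ∪ (Set.Icc (-s) s)ᶜ := by
    intro i x hx
    by_cases hmem : x ∈ Set.Icc (-s) s
    · left
      obtain ⟨hx1, hx2⟩ := Set.mem_Icc.mp hmem
      have hc := abs_le.mp (hsens i)
      simp only [hT, Set.mem_setOf_eq] at hx
      rcases hx with h | h
      · left; exact Set.mem_Icc.mpr ⟨hx1, by linarith [hc.1, hc.2]⟩
      · right; exact Set.mem_Icc.mpr ⟨by linarith [hc.1, hc.2], hx2⟩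
    · right; exact hmem
  have hνT : ∀ i, ν (T i) ≤ ENNReal.ofReal (δ / m) := by
    intro i
    calc ν (T i)
        ≤ ν ((Set.Icc (-s) (Δ - s) ∪ Set.Icc (s - Δ) s) ∪ (Set.Icc (-s) s)ᶜ) :=
          measure_mono (hTsub i)
      _ ≤ ν (Set.Icc (-s) (Δ - s) ∪ Set.Icc (s - Δ) s) + ν (Set.Icc (-s) s)ᶜ :=
          measure_union_le _ _
      _ ≤ (ν (Set.Icc (-s) (Δ - s)) + ν (Set.Icc (s - Δ) s)) + ν (Set.Icc (-s) s)ᶜ :=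
          add_le_add_left (measure_union_le _ _) _
      _ = ENNReal.ofReal t + ENNReal.ofReal t + 0 := by rw [htail1, htail2, hν_compl]
      _ = ENNReal.ofReal (t + t) := by rw [add_zero, ENNReal.ofReal_add ht_nonneg ht_nonneg]
      _ = ENNReal.ofReal (δ / m) := by rw [h2t]
  -- union bound
  have hsubset : {η : Fin m → ℝ |
      ¬ ∀ i, bD' i - 2 * s ≤ bD i - s + η i ∧ bD i - s + η i ≤ bD' i}
      ⊆ ⋃ i, Function.eval i ⁻¹' T i := by
    intro η hη
    simp only [Set.mem_setOf_eq] at hη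
    push_neg at hη
    obtain ⟨i, hi⟩ := hη
    refine Set.mem_iUnion.mpr ⟨i, ?_⟩
    simp only [Set.mem_preimage, Function.eval, hT, Set.mem_setOf_eq]
    by_contra hx
    push_neg at hx
    obtain ⟨h1, h2⟩ := hx
    have := hi (by linarith)
    linarith
  have hbound : ∀ i : Fin m,
      Measure.pi (fun _ : Fin m => ν) (Function.eval i ⁻¹' T i) ≤ ENNReal.ofReal (δ / m) := by
    intro i
    rw [Set.eval_preimage, Measure.pi_pi]
    have hupdate : ∀ j, ν (Function.update (fun _ : Fin m => (Set.univ : Set ℝ)) i (T i) j)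
        = if j = i then ν (T i) else 1 := by
      intro j
      rcases eq_or_ne j i with rfl | hj
      · simp
      · simp [Function.update_apply, hj, hν_univ]
    rw [Finset.prod_congr rfl (fun j _ => hupdate j)]
    rw [Fintype.prod_ite_eq' i (fun _ => ν (T i))]
    exact hνT i
  refine le_trans (measure_mono hsubset) ?_
  calc Measure.pi (fun _ : Fin m => ν) (⋃ i, Function.eval i ⁻¹' T i)
      ≤ ∑' i, Measure.pi (fun _ : Fin m => ν) (Function.eval i ⁻¹' T i) :=
        measure_iUnion_le _
    _ = ∑ i : Fin m, Measure.pi (fun _ : Fin m => ν) (Function.eval i ⁻¹' T i) :=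
        tsum_fintype _
    _ ≤ ∑ _i : Fin m, ENNReal.ofReal (δ / m) := Finset.sum_le_sum (fun i _ => hbound i)
    _ = ENNReal.ofReal δ := by
        rw [Finset.sum_const, Finset.card_univ, Fintype.card_fin, nsmul_eq_mul,
          ← ENNReal.ofReal_natCast m, ← ENNReal.ofReal_mul (by positivity)]
        congr 1
        field_simp
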